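/- arXiv:2009.04709 — 10 statements merged into one kernel-verified Lean document; each statement's English description precedes it below -/
import Mathlib

section
/- Let E be a real inner product space and C a class set. A linear multiclass classifier is given by weights W : C → E and biases b : C → ℝ, with logits logit_c(v) = ⟪W_c, v⟫ + b_c. Fix x ∈ E and classes y, c with logit_y(x) ≥ logit_c(x) and W_y ≠ W_c. Then the infimum of ‖δ‖ over all δ ∈ E with logit_c(x + δ) ≥ logit_y(x + δ) equals (logit_y(x) − logit_c(x)) / ‖W_y − W_c‖. (This is the per-class robustness magnitude |ρ(x)_c| of Lemma 1.) -/
open RealInnerProductSpace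

/-- Per-class robustness magnitude `|ρ(x)_c|` of Lemma 1: for a linear multiclass
classifier with logits `logit_c v = ⟪W c, v⟫ + b c`, the distance from `x` to the set
of perturbed points where class `c` scores at least class `y`. -/
theorem perClass_robustness {E C : Type*} [NormedAddCommGroup E] [InnerProductSpace ℝ E]
    (W : C → E) (b : C → ℝ) (x : E) (y c : C)
    (h : ⟪W y, x⟫ + b y ≥ ⟪W c, x⟫ + b c) (hW : W y ≠ W c) :
    sInf {r : ℝ | ∃ δ : E, ⟪W c, x + δ⟫ + b c ≥ ⟪W y, x + δ⟫ + b y ∧ ‖δ‖ = r}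
      = ((⟪W y, x⟫ + b y) - (⟪W c, x⟫ + b c)) / ‖W y - W c‖ := by
  set w : E := W y - W c with hw
  set g : ℝ := (⟪W y, x⟫ + b y) - (⟪W c, x⟫ + b c) with hg
  have hwne : w ≠ 0 := sub_ne_zero.mpr hW
  have hwpos : (0:ℝ) < ‖w‖ := norm_pos_iff.mpr hwne
  have hg0 : 0 ≤ g := sub_nonneg.mpr h
  -- reformulate the membership condition
  have hcond : ∀ δ : E, (⟪W c, x + δ⟫ + b c ≥ ⟪W y, x + δ⟫ + b y) ↔ ⟪w, δ⟫ ≤ -g := by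
    intro δ
    rw [hw, hg]
    simp only [inner_add_right, inner_sub_left]
    constructor <;> intro hh <;> linarith
  -- lower bound
  have hlb : ∀ r ∈ {r : ℝ | ∃ δ : E, ⟪W c, x + δ⟫ + b c ≥ ⟪W y, x + δ⟫ + b y ∧ ‖δ‖ = r},
      g / ‖w‖ ≤ r := by
    rintro r ⟨δ, hδ, rfl⟩
    rw [hcond] at hδ
    have hcs : ⟪w, -δ⟫ ≤ ‖w‖ * ‖-δ‖ := real_inner_le_norm w (-δ)
    rw [inner_neg_right, norm_neg] at hcs
    have : g ≤ ‖w‖ * ‖δ‖ := by linarith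
    rw [div_le_iff₀ hwpos]
    linarith [this]
  -- the witness achieving the bound
  have hmem : (g / ‖w‖) ∈
      {r : ℝ | ∃ δ : E, ⟪W c, x + δ⟫ + b c ≥ ⟪W y, x + δ⟫ + b y ∧ ‖δ‖ = r} := by
    refine ⟨(-(g / ‖w‖^2)) • w, ?_, ?_⟩
    · rw [hcond, real_inner_smul_right, real_inner_self_eq_norm_sq]
      have : g / ‖w‖ ^ 2 * ‖w‖ ^ 2 = g := by
        field_simp
      rw [neg_mul, this]
    · rw [norm_smul, Real.norm_eq_abs, abs_neg, abs_div, abs_of_nonneg hg0,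
        abs_of_nonneg (by positivity : (0:ℝ) ≤ ‖w‖^2)]
      field_simp
  refine le_antisymm (csInf_le ⟨g / ‖w‖, hlb⟩ hmem) (le_csInf ⟨_, hmem⟩ hlb)
end

section
/- Let E be a real inner product space and C a finite class set. A linear multiclass classifier is given by weights W : C → E and biases b : C → ℝ, with logits logit_c(v) = ⟪W_c, v⟫ + b_c. Fix x ∈ E and a class y such that there exists at least one class c ≠ y, and assume for every class c ≠ y that logit_y(x) > logit_c(x) (x is classified as y) and W_c ≠ W_y. Then the robustness magnitude at x, namely the infimum of ‖δ‖ over all δ ∈ E for which there exists a class c ≠ y with logit_c(x + δ) ≥ logit_y(x + δ), equals the minimum over classes c ≠ y of (logit_y(x) − logit_c(x)) / ‖W_y − W_c‖. (Lemma 1: for a locally linear model the robustness is the minimum of the pairwise boundary distances.) -/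
open RealInnerProductSpace

/-- Lemma 1: for a locally linear multiclass model with logits
`logit_c v = ⟪W c, v⟫ + b c`, if `x` is classified as `y`, then the robustness
magnitude at `x` equals the minimum over classes `c ≠ y` of the pairwise boundary
distances `(logit_y x − logit_c x) / ‖W y − W c‖`. -/
theorem lemma1_robustness_min {E C : Type*} [NormedAddCommGroup E] [InnerProductSpace ℝ E]
    [Fintype C] (W : C → E) (b : C → ℝ) (x : E) (y : C)
    (hne : ∃ c : C, c ≠ y)
    (hclass : ∀ c : C, c ≠ y → ⟪W y, x⟫ + b y > ⟪W c, x⟫ + b c)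
    (hW : ∀ c : C, c ≠ y → W c ≠ W y) :
    sInf {r : ℝ | ∃ δ : E, (∃ c : C, c ≠ y ∧ ⟪W c, x + δ⟫ + b c ≥ ⟪W y, x + δ⟫ + b y)
        ∧ ‖δ‖ = r}
      = ⨅ c : {c : C // c ≠ y},
          ((⟪W y, x⟫ + b y) - (⟪W c.1, x⟫ + b c.1)) / ‖W y - W c.1‖ := by
  haveI : Nonempty {c : C // c ≠ y} := ⟨⟨hne.choose, hne.choose_spec⟩⟩
  set d : {c : C // c ≠ y} → ℝ :=
    fun c => ((⟪W y, x⟫ + b y) - (⟪W c.1, x⟫ + b c.1)) / ‖W y - W c.1‖ with hd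
  set S : Set ℝ := {r : ℝ | ∃ δ : E,
      (∃ c : C, c ≠ y ∧ ⟪W c, x + δ⟫ + b c ≥ ⟪W y, x + δ⟫ + b y) ∧ ‖δ‖ = r} with hS
  have hgap : ∀ c : {c : C // c ≠ y}, 0 < (⟪W y, x⟫ + b y) - (⟪W c.1, x⟫ + b c.1) :=
    fun c => sub_pos.2 (hclass c.1 c.2)
  have hnorm : ∀ c : {c : C // c ≠ y}, 0 < ‖W y - W c.1‖ := fun c => by
    rw [norm_pos_iff, sub_ne_zero]
    exact (hW c.1 c.2).symm
  -- each pairwise boundary distance is achieved by an explicit δ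
  have hmem : ∀ c : {c : C // c ≠ y}, d c ∈ S := by
    rintro ⟨c, hc⟩
    set n := ‖W y - W c‖ with hn
    have h0 : 0 < n := hnorm ⟨c, hc⟩
    set g := (⟪W y, x⟫ + b y) - (⟪W c, x⟫ + b c) with hg
    have hgpos : 0 < g := hgap ⟨c, hc⟩
    have hdc : d ⟨c, hc⟩ = g / n := rfl
    rw [hdc]
    set δ0 := (g / n ^ 2) • (W c - W y) with hδ0
    have hin : ⟪W y, δ0⟫ - ⟪W c, δ0⟫ = -g := by
      rw [hδ0, ← inner_sub_left, real_inner_smul_right,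
        show (W c - W y) = -(W y - W c) by abel, inner_neg_right,
        real_inner_self_eq_norm_sq, ← hn]
      field_simp
    refine ⟨δ0, ⟨c, hc, ?_⟩, ?_⟩
    · simp only [inner_add_right]
      linarith [hin, hg]
    · rw [hδ0, norm_smul, norm_sub_rev (W c), ← hn, Real.norm_eq_abs,
        abs_of_nonneg (le_of_lt (div_pos hgpos (pow_pos h0 2)))]
      field_simp
  -- S is bounded below by 0
  have hbdd : BddBelow S := ⟨0, by rintro r ⟨δ, -, rfl⟩; exact norm_nonneg δ⟩
  have hSne : S.Nonempty := ⟨d ⟨hne.choose, hne.choose_spec⟩, hmem _⟩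
  apply le_antisymm
  · exact le_ciInf fun c => csInf_le hbdd (hmem c)
  · refine le_csInf hSne ?_
    rintro r ⟨δ, ⟨c, hc, hge⟩, rfl⟩
    have key : d ⟨c, hc⟩ ≤ ‖δ‖ := by
      have hin : (⟪W y, x⟫ + b y) - (⟪W c, x⟫ + b c) ≤ ⟪W c - W y, δ⟫ := by
        simp only [inner_add_right, inner_sub_left] at hge ⊢
        linarith
      have hcs : ⟪W c - W y, δ⟫ ≤ ‖W c - W y‖ * ‖δ‖ := real_inner_le_norm _ _
      rw [hd]
      rw [div_le_iff₀ (hnorm ⟨c, hc⟩)]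
      calc (⟪W y, x⟫ + b y) - (⟪W c, x⟫ + b c) ≤ ‖W c - W y‖ * ‖δ‖ := le_trans hin hcs
        _ = ‖δ‖ * ‖W y - W c‖ := by rw [norm_sub_rev]; ring
    exact le_trans (ciInf_le (Finite.bddBelow_range d) ⟨c, hc⟩) key
end

section
/- Let E be a real inner product space, w ∈ E with w ≠ 0, and b ∈ ℝ, defining a binary linear classifier that outputs the positive class at v when ⟪w, v⟫ + b > 0 and the negative class when ⟪w, v⟫ + b < 0. Let x_i, x_j ∈ E with x_i ≠ x_j, and suppose both are correctly classified: ⟪w, x_i⟫ + b < 0 (ground truth negative) and ⟪w, x_j⟫ + b > 0 (ground truth positive). Then the sum of their robustnesses, inf{‖δ‖ : ⟪w, x_i + δ⟫ + b ≥ 0} + inf{‖δ‖ : ⟪w, x_j + δ⟫ + b ≤ 0}, equals ‖x_j − x_i‖ · sim(x_j − x_i, w). (Theorem 1, case of two correctly classified inputs.) -/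
open RealInnerProductSpace

lemma key_least {E : Type*} [NormedAddCommGroup E] [InnerProductSpace ℝ E]
    (w : E) (hw : w ≠ 0) (b : ℝ) (x : E) (hx : ⟪w, x⟫ + b < 0) :
    IsLeast {r : ℝ | ∃ δ : E, ⟪w, x + δ⟫ + b ≥ 0 ∧ ‖δ‖ = r} (-(⟪w, x⟫ + b) / ‖w‖) := by
  have hwn : (0:ℝ) < ‖w‖ := norm_pos_iff.mpr hw
  constructor
  · refine ⟨(-(⟪w, x⟫ + b) / ‖w‖ ^ 2) • w, ?_, ?_⟩
    · rw [inner_add_right, real_inner_smul_right, real_inner_self_eq_norm_sq]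
      have : -(⟪w, x⟫ + b) / ‖w‖ ^ 2 * ‖w‖ ^ 2 = -(⟪w, x⟫ + b) := by
        field_simp
      nlinarith
    · rw [norm_smul, Real.norm_eq_abs, abs_div, abs_of_nonneg (by linarith : (0:ℝ) ≤ -(⟪w, x⟫ + b)),
        abs_of_nonneg (sq_nonneg _)]
      field_simp
  · rintro r ⟨δ, hδ, rfl⟩
    rw [inner_add_right] at hδ
    have h1 : ⟪w, δ⟫ ≤ ‖w‖ * ‖δ‖ := real_inner_le_norm w δ
    rw [div_le_iff₀ hwn]
    nlinarith

/-- Theorem 1, case of two correctly classified inputs: for the binary linear classifier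
`v ↦ ⟪w, v⟫ + b`, the sum of the robustnesses of a correctly classified negative point
`x_i` and a correctly classified positive point `x_j` equals
`‖x_j − x_i‖ · sim(x_j − x_i, w)`, where `sim` is cosine similarity. -/
theorem theorem1_correct_pair {E : Type*} [NormedAddCommGroup E] [InnerProductSpace ℝ E]
    (w : E) (hw : w ≠ 0) (b : ℝ) (xi xj : E) (hne : xi ≠ xj)
    (hi : ⟪w, xi⟫ + b < 0) (hj : ⟪w, xj⟫ + b > 0) :
    sInf {r : ℝ | ∃ δ : E, ⟪w, xi + δ⟫ + b ≥ 0 ∧ ‖δ‖ = r}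
      + sInf {r : ℝ | ∃ δ : E, ⟪w, xj + δ⟫ + b ≤ 0 ∧ ‖δ‖ = r}
      = ‖xj - xi‖ * (⟪xj - xi, w⟫ / (‖xj - xi‖ * ‖w‖)) := by
  have hwn : (0:ℝ) < ‖w‖ := norm_pos_iff.mpr hw
  have h1 : sInf {r : ℝ | ∃ δ : E, ⟪w, xi + δ⟫ + b ≥ 0 ∧ ‖δ‖ = r} = -(⟪w, xi⟫ + b) / ‖w‖ :=
    (key_least w hw b xi hi).csInf_eq
  have hj' : ⟪-w, xj⟫ + (-b) < 0 := by rw [inner_neg_left]; linarith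
  have hset : {r : ℝ | ∃ δ : E, ⟪w, xj + δ⟫ + b ≤ 0 ∧ ‖δ‖ = r}
      = {r : ℝ | ∃ δ : E, ⟪-w, xj + δ⟫ + (-b) ≥ 0 ∧ ‖δ‖ = r} := by
    ext r
    simp only [Set.mem_setOf_eq, inner_neg_left]
    constructor
    · rintro ⟨δ, h, hr⟩; exact ⟨δ, by linarith, hr⟩
    · rintro ⟨δ, h, hr⟩; exact ⟨δ, by linarith, hr⟩
  have h2 : sInf {r : ℝ | ∃ δ : E, ⟪w, xj + δ⟫ + b ≤ 0 ∧ ‖δ‖ = r} = (⟪w, xj⟫ + b) / ‖w‖ := by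
    rw [hset, (key_least (-w) (neg_ne_zero.mpr hw) (-b) xj hj').csInf_eq]
    rw [inner_neg_left, norm_neg]
    ring_nf
  rw [h1, h2]
  have hd : xj - xi ≠ 0 := sub_ne_zero.mpr hne.symm
  have hdn : (0:ℝ) < ‖xj - xi‖ := norm_pos_iff.mpr hd
  rw [inner_sub_left, real_inner_comm xj w, real_inner_comm xi w]
  field_simp
  ring
end

section
/- Let E be a real inner product space, w ∈ E with w ≠ 0, and b ∈ ℝ, defining a binary linear classifier logit_b(v) = ⟪w, v⟫ + b. Define the signed robustness for a point with ground truth negative class by ρ₋(x) = inf{‖δ‖ : ⟪w, x + δ⟫ + b ≥ 0} if ⟪w, x⟫ + b ≤ 0, and ρ₋(x) = −inf{‖δ‖ : ⟪w, x + δ⟫ + b ≤ 0} otherwise; and for a point with ground truth positive class by ρ₊(x) = inf{‖δ‖ : ⟪w, x + δ⟫ + b ≤ 0} if ⟪w, x⟫ + b ≥ 0, and ρ₊(x) = −inf{‖δ‖ : ⟪w, x + δ⟫ + b ≥ 0} otherwise. Then for any x_i, x_j ∈ E with x_i ≠ x_j (x_i of ground truth negative class, x_j of ground truth positive class), ρ₋(x_i)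 + ρ₊(x_j) = ‖x_j − x_i‖ · sim(x_j − x_i, w). (Theorem 1 in full, including misclassified inputs via negative robustness.) -/
open RealInnerProductSpace

/-- Signed robustness of a point whose ground truth is the negative class
(`⟪w, ·⟫ + b < 0`): distance to the set where the classifier outputs the positive
class, with a negative sign when the point is misclassified. -/
noncomputable def rhoNeg {E : Type*} [NormedAddCommGroup E] [InnerProductSpace ℝ E]
    (w : E) (b : ℝ) (x : E) : ℝ :=
  if ⟪w, x⟫ + b ≤ 0 then
    sInf {r : ℝ | ∃ δ : E, ⟪w, x + δ⟫ + b ≥ 0 ∧ ‖δ‖ = r}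
  else
    -sInf {r : ℝ | ∃ δ : E, ⟪w, x + δ⟫ + b ≤ 0 ∧ ‖δ‖ = r}

/-- Signed robustness of a point whose ground truth is the positive class
(`⟪w, ·⟫ + b > 0`): distance to the set where the classifier outputs the negative
class, with a negative sign when the point is misclassified. -/
noncomputable def rhoPos {E : Type*} [NormedAddCommGroup E] [InnerProductSpace ℝ E]
    (w : E) (b : ℝ) (x : E) : ℝ :=
  if ⟪w, x⟫ + b ≥ 0 then
    sInf {r : ℝ | ∃ δ : E, ⟪w, x + δ⟫ + b ≤ 0 ∧ ‖δ‖ = r}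
  else
    -sInf {r : ℝ | ∃ δ : E, ⟪w, x + δ⟫ + b ≥ 0 ∧ ‖δ‖ = r}

lemma sInf_cross {E : Type*} [NormedAddCommGroup E] [InnerProductSpace ℝ E]
    (w : E) (hw : w ≠ 0) (b : ℝ) (x : E) (h : ⟪w, x⟫ + b ≤ 0) :
    sInf {r : ℝ | ∃ δ : E, ⟪w, x + δ⟫ + b ≥ 0 ∧ ‖δ‖ = r}
      = -(⟪w, x⟫ + b) / ‖w‖ := by
  have hwn : (0:ℝ) < ‖w‖ := norm_pos_iff.mpr hw
  set c : ℝ := ⟪w, x⟫ + b with hc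
  have hmem : (-c / ‖w‖^2 * ‖w‖) ∈ {r : ℝ | ∃ δ : E, ⟪w, x + δ⟫ + b ≥ 0 ∧ ‖δ‖ = r} := by
    refine Set.mem_setOf.mpr ⟨(-c / ‖w‖^2) • w, ?_, ?_⟩
    · rw [inner_add_right, inner_smul_right, real_inner_self_eq_norm_sq,
        div_mul_cancel₀ _ (by positivity : ‖w‖^2 ≠ 0)]
      simp only [hc]; linarith
    · rw [norm_smul, Real.norm_eq_abs, abs_div, abs_of_nonneg (by linarith : (0:ℝ) ≤ -c),
        abs_of_nonneg (by positivity : (0:ℝ) ≤ ‖w‖^2)]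
  apply le_antisymm
  · have hbdd : BddBelow {r : ℝ | ∃ δ : E, ⟪w, x + δ⟫ + b ≥ 0 ∧ ‖δ‖ = r} :=
      ⟨0, fun r hr => by obtain ⟨δ, _, hδ⟩ := hr; exact hδ ▸ norm_nonneg δ⟩
    have := csInf_le hbdd hmem
    calc sInf _ ≤ -c / ‖w‖^2 * ‖w‖ := this
      _ = -c / ‖w‖ := by field_simp
  · refine le_csInf ⟨_, hmem⟩ ?_
    rintro r ⟨δ, hδ1, rfl⟩
    have h1 : -c ≤ ⟪w, δ⟫ := by
      rw [inner_add_right] at hδ1; linarith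
    have h2 : ⟪w, δ⟫ ≤ ‖w‖ * ‖δ‖ := real_inner_le_norm w δ
    rw [div_le_iff₀ hwn]
    nlinarith

lemma sInf_cross' {E : Type*} [NormedAddCommGroup E] [InnerProductSpace ℝ E]
    (w : E) (hw : w ≠ 0) (b : ℝ) (x : E) (h : ⟪w, x⟫ + b ≥ 0) :
    sInf {r : ℝ | ∃ δ : E, ⟪w, x + δ⟫ + b ≤ 0 ∧ ‖δ‖ = r}
      = (⟪w, x⟫ + b) / ‖w‖ := by
  have h' : ⟪-w, x⟫ + (-b) ≤ 0 := by rw [inner_neg_left]; linarith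
  have := sInf_cross (-w) (neg_ne_zero.mpr hw) (-b) x h'
  have hset : {r : ℝ | ∃ δ : E, ⟪w, x + δ⟫ + b ≤ 0 ∧ ‖δ‖ = r}
      = {r : ℝ | ∃ δ : E, ⟪-w, x + δ⟫ + (-b) ≥ 0 ∧ ‖δ‖ = r} := by
    ext r
    constructor <;> rintro ⟨δ, h1, h2⟩ <;> refine ⟨δ, ?_, h2⟩ <;>
      simp only [inner_neg_left] at * <;> linarith
  rw [hset, this, inner_neg_left, norm_neg]
  ring

lemma rhoNeg_eq {E : Type*} [NormedAddCommGroup E] [InnerProductSpace ℝ E]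
    (w : E) (hw : w ≠ 0) (b : ℝ) (x : E) :
    rhoNeg w b x = -(⟪w, x⟫ + b) / ‖w‖ := by
  unfold rhoNeg
  split_ifs with h
  · exact sInf_cross w hw b x h
  · rw [sInf_cross' w hw b x (by linarith)]; ring

lemma rhoPos_eq {E : Type*} [NormedAddCommGroup E] [InnerProductSpace ℝ E]
    (w : E) (hw : w ≠ 0) (b : ℝ) (x : E) :
    rhoPos w b x = (⟪w, x⟫ + b) / ‖w‖ := by
  unfold rhoPos
  split_ifs with h
  · exact sInf_cross' w hw b x h
  · rw [sInf_cross w hw b x (by linarith)]; ring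

/-- Theorem 1 in full, including misclassified inputs via negative robustness:
for any `x_i` of ground truth negative class and `x_j` of ground truth positive class,
`ρ₋(x_i) + ρ₊(x_j) = ‖x_j − x_i‖ · sim(x_j − x_i, w)`. -/
theorem theorem1_full {E : Type*} [NormedAddCommGroup E] [InnerProductSpace ℝ E]
    (w : E) (hw : w ≠ 0) (b : ℝ) (xi xj : E) (hne : xi ≠ xj) :
    rhoNeg w b xi + rhoPos w b xj
      = ‖xj - xi‖ * (⟪xj - xi, w⟫ / (‖xj - xi‖ * ‖w‖)) := by
  rw [rhoNeg_eq w hw, rhoPos_eq w hw]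
  have hd : ‖xj - xi‖ ≠ 0 := by
    simpa [sub_eq_zero] using fun h => hne h.symm
  have hwn : ‖w‖ ≠ 0 := norm_ne_zero_iff.mpr hw
  rw [inner_sub_left, real_inner_comm xj w, real_inner_comm xi w]
  field_simp
  ring
end

section
/- Let E be a real inner product space, C a finite class set, and a linear multiclass classifier given by weights W : C → E and biases b : C → ℝ with logits logit_c(v) = ⟪W_c, v⟫ + b_c. Let i ≠ j be classes and x_i ≠ x_j points such that: (a) x_i is correctly classified as i, i.e. logit_i(x_i) > logit_c(x_i) for all c ≠ i, and x_j is correctly classified as j; (b) W_c ≠ W_i for all c ≠ i and W_c ≠ W_j for all c ≠ j; (c) the nearest decision boundary from x_i is the i–j boundary, i.e. for all c ≠ i, (logit_i(x_i) − logit_j(x_i))/‖W_i − W_j‖ ≤ (logit_i(x_i) − logit_c(x_i))/‖W_i − W_c‖, and symmetrically the nearest boundary from x_j is the j–i boundary. Then inf{‖δ‖ : ∃ c ≠ i, logit_c(x_i + δ) ≥ logit_i(x_i + δ)} + inf{‖δ‖ : ∃ c ≠ j, logit_c(x_j + δ) ≥ logit_j(x_j + δ)} = ‖x_j − x_i‖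 · sim(x_j − x_i, W_j − W_i). (Theorem 1, multiclass form: combined robustness of a pair of inputs of adjacent classes is proportional to the alignment between the vector connecting them and the gradient difference W_j − W_i.) -/
open RealInnerProductSpace

lemma robust_dist_eq {E C : Type*} [NormedAddCommGroup E] [InnerProductSpace ℝ E]
    [Fintype C] (W : C → E) (b : C → ℝ) (i j : C) (hij : j ≠ i) (x : E)
    (hclass : ∀ c : C, c ≠ i → ⟪W i, x⟫ + b i > ⟪W c, x⟫ + b c)
    (hW : ∀ c : C, c ≠ i → W c ≠ W i)
    (hnearest : ∀ c : C, c ≠ i →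
      ((⟪W i, x⟫ + b i) - (⟪W j, x⟫ + b j)) / ‖W i - W j‖
        ≤ ((⟪W i, x⟫ + b i) - (⟪W c, x⟫ + b c)) / ‖W i - W c‖) :
    sInf {r : ℝ | ∃ δ : E, (∃ c : C, c ≠ i ∧ ⟪W c, x + δ⟫ + b c ≥ ⟪W i, x + δ⟫ + b i)
        ∧ ‖δ‖ = r}
      = ((⟪W i, x⟫ + b i) - (⟪W j, x⟫ + b j)) / ‖W i - W j‖ := by
  set v : E := W j - W i with hv_def
  have hv : v ≠ 0 := sub_ne_zero.mpr (hW j hij)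
  have hvn : (0:ℝ) < ‖v‖ := norm_pos_iff.mpr hv
  set aj : ℝ := (⟪W i, x⟫ + b i) - (⟪W j, x⟫ + b j) with haj_def
  have haj : 0 < aj := by have := hclass j hij; simp [haj_def]; linarith
  have hnormij : ‖W i - W j‖ = ‖v‖ := by rw [hv_def, norm_sub_rev]
  -- lower bound
  have hlb : ∀ r ∈ {r : ℝ | ∃ δ : E, (∃ c : C, c ≠ i ∧ ⟪W c, x + δ⟫ + b c ≥ ⟪W i, x + δ⟫ + b i)
        ∧ ‖δ‖ = r}, aj / ‖v‖ ≤ r := by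
    rintro r ⟨δ, ⟨c, hc, hge⟩, rfl⟩
    have hvc : W c - W i ≠ 0 := sub_ne_zero.mpr (hW c hc)
    have hvcn : (0:ℝ) < ‖W c - W i‖ := norm_pos_iff.mpr hvc
    set ac : ℝ := (⟪W i, x⟫ + b i) - (⟪W c, x⟫ + b c) with hac_def
    have h1 : ac ≤ ⟪W c - W i, δ⟫ := by
      have := hge
      simp only [inner_add_right] at this
      rw [inner_sub_left, hac_def]
      linarith
    have h2 : ⟪W c - W i, δ⟫ ≤ ‖W c - W i‖ * ‖δ‖ := real_inner_le_norm _ _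
    have h3 : ac / ‖W c - W i‖ ≤ ‖δ‖ := by
      rw [div_le_iff₀ hvcn]; nlinarith
    have h4 := hnearest c hc
    rw [hnormij] at h4
    calc aj / ‖v‖ ≤ ac / ‖W i - W c‖ := h4
      _ = ac / ‖W c - W i‖ := by rw [norm_sub_rev]
      _ ≤ ‖δ‖ := h3
  -- membership
  have hmem : aj / ‖v‖ ∈ {r : ℝ | ∃ δ : E, (∃ c : C, c ≠ i ∧ ⟪W c, x + δ⟫ + b c ≥ ⟪W i, x + δ⟫ + b i)
        ∧ ‖δ‖ = r} := by
    refine ⟨(aj / ‖v‖ ^ 2) • v, ⟨j, hij, ?_⟩, ?_⟩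
    · have hinner : ⟪v, (aj / ‖v‖ ^ 2) • v⟫ = aj := by
        rw [real_inner_smul_right, real_inner_self_eq_norm_sq]
        field_simp
      simp only [hv_def, inner_sub_left] at hinner
      simp only [ge_iff_le, inner_add_right]
      have haj' := haj_def
      linarith
    · rw [norm_smul]
      rw [Real.norm_eq_abs, abs_of_pos (by positivity)]
      field_simp
  rw [hnormij]
  exact le_antisymm (csInf_le ⟨aj / ‖v‖, hlb⟩ hmem) (le_csInf ⟨_, hmem⟩ hlb)

/-- Theorem 1, multiclass form: for a linear multiclass classifier with logits
`logit_c v = ⟪W c, v⟫ + b c`, if `x_i` is correctly classified as `i`, `x_j` as `j`,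
the weight differences to all other classes are nonzero, and the nearest decision
boundary from `x_i` (resp. `x_j`) is the `i`–`j` boundary, then the combined robustness
of the pair equals `‖x_j − x_i‖ · sim(x_j − x_i, W j − W i)`. -/
theorem theorem1_multiclass {E C : Type*} [NormedAddCommGroup E] [InnerProductSpace ℝ E]
    [Fintype C] (W : C → E) (b : C → ℝ) (i j : C) (hij : i ≠ j)
    (xi xj : E) (hxij : xi ≠ xj)
    (hclassi : ∀ c : C, c ≠ i → ⟪W i, xi⟫ + b i > ⟪W c, xi⟫ + b c)
    (hclassj : ∀ c : C, c ≠ j → ⟪W j, xj⟫ + b j > ⟪W c, xj⟫ + b c)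
    (hWi : ∀ c : C, c ≠ i → W c ≠ W i)
    (hWj : ∀ c : C, c ≠ j → W c ≠ W j)
    (hnearesti : ∀ c : C, c ≠ i →
      ((⟪W i, xi⟫ + b i) - (⟪W j, xi⟫ + b j)) / ‖W i - W j‖
        ≤ ((⟪W i, xi⟫ + b i) - (⟪W c, xi⟫ + b c)) / ‖W i - W c‖)
    (hnearestj : ∀ c : C, c ≠ j →
      ((⟪W j, xj⟫ + b j) - (⟪W i, xj⟫ + b i)) / ‖W j - W i‖
        ≤ ((⟪W j, xj⟫ + b j) - (⟪W c, xj⟫ + b c)) / ‖W j - W c‖) :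
    sInf {r : ℝ | ∃ δ : E, (∃ c : C, c ≠ i ∧ ⟪W c, xi + δ⟫ + b c ≥ ⟪W i, xi + δ⟫ + b i)
        ∧ ‖δ‖ = r}
      + sInf {r : ℝ | ∃ δ : E, (∃ c : C, c ≠ j ∧ ⟪W c, xj + δ⟫ + b c ≥ ⟪W j, xj + δ⟫ + b j)
        ∧ ‖δ‖ = r}
      = ‖xj - xi‖ * (⟪xj - xi, W j - W i⟫ / (‖xj - xi‖ * ‖W j - W i‖)) := by
  rw [robust_dist_eq W b i j hij.symm xi hclassi hWi hnearesti,
      robust_dist_eq W b j i hij xj hclassj hWj hnearestj]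
  have hw : W j - W i ≠ 0 := sub_ne_zero.mpr (hWi j hij.symm)
  have hwn : (0:ℝ) < ‖W j - W i‖ := norm_pos_iff.mpr hw
  have hxn : (0:ℝ) < ‖xj - xi‖ := norm_pos_iff.mpr (sub_ne_zero.mpr (Ne.symm hxij))
  have hn : ‖W i - W j‖ = ‖W j - W i‖ := norm_sub_rev _ _
  have hin : ⟪xj - xi, W j - W i⟫
      = ((⟪W i, xi⟫ + b i) - (⟪W j, xi⟫ + b j))
        + ((⟪W j, xj⟫ + b j) - (⟪W i, xj⟫ + b i)) := by
    rw [real_inner_comm]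
    simp only [inner_sub_left, inner_sub_right]
    ring
  rw [hn, hin]
  field_simp
end

section
/- Let E be a real normed vector space with its Borel σ-algebra, μ a probability measure on E, and A, B disjoint measurable subsets with μ(A) + μ(B) = 1. Let T : E → E be measurable with (μ restricted to A) pushed forward by T equal to μ restricted to B (a measure-preserving pairing between the supports of the two classes). Let ρ, α : E → ℝ be μ-integrable, and let d₁ ≥ 0. Assume for every x ∈ A: (i) ρ(x) + ρ(T x) = ‖T x − x‖ · α(x); (ii) α(T x) = α(x); (iii) α(x) ≥ 0; (iv) ‖T x − x‖ ≥ d₁. Then the expected robustness satisfies ∫ ρ dμ ≥ d₁ · (∫ α dμ) / 2. (Theorem 2, lower bound: expected robustness is at least inf(𝒟) times half the expected alignment.) -/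
open MeasureTheory

/-- Theorem 2, lower bound: given a measure-preserving pairing `T` between the supports
`A` and `B` of the two classes, with pointwise robustness `ρ` and alignment `α`
satisfying `ρ x + ρ (T x) = ‖T x − x‖ · α x`, `α (T x) = α x`, `α x ≥ 0`, and
`‖T x − x‖ ≥ d₁` on `A`, the expected robustness is at least `d₁ · (∫ α) / 2`. -/
theorem theorem2_lower_bound {E : Type*} [NormedAddCommGroup E] [NormedSpace ℝ E]
    [MeasurableSpace E] [BorelSpace E]
    (μ : Measure E) [IsProbabilityMeasure μ]
    (A B : Set E) (hA : MeasurableSet A) (hB : MeasurableSet B)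
    (hdisj : Disjoint A B) (hAB : μ A + μ B = 1)
    (T : E → E) (hT : Measurable T)
    (hmap : Measure.map T (μ.restrict A) = μ.restrict B)
    (ρ α : E → ℝ) (hρ : Integrable ρ μ) (hα : Integrable α μ)
    (d₁ : ℝ) (hd₁ : 0 ≤ d₁)
    (hpair : ∀ x ∈ A, ρ x + ρ (T x) = ‖T x - x‖ * α x)
    (hαT : ∀ x ∈ A, α (T x) = α x)
    (hαpos : ∀ x ∈ A, 0 ≤ α x)
    (hdist : ∀ x ∈ A, d₁ ≤ ‖T x - x‖) :
    ∫ x, ρ x ∂μ ≥ d₁ * (∫ x, α x ∂μ) / 2 := by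
  have hAunion : MeasurableSet (A ∪ B) := hA.union hB
  have hcompl : μ (A ∪ B)ᶜ = 0 := by
    have h1 : μ (A ∪ B) = 1 := by rw [measure_union hdisj hB]; exact hAB
    rw [measure_compl hAunion (measure_ne_top μ _), h1, measure_univ]
    simp
  -- split of full integral
  have hsplit : ∀ (f : E → ℝ), Integrable f μ →
      ∫ x, f x ∂μ = (∫ x in A, f x ∂μ) + ∫ x in B, f x ∂μ := by
    intro f hf
    have h0 : ∫ x in (A ∪ B)ᶜ, f x ∂μ = 0 := by
      rw [Measure.restrict_eq_zero.mpr hcompl]; simp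
    have := integral_add_compl hAunion hf
    rw [h0, add_zero] at this
    rw [← this, setIntegral_union hdisj hB hf.integrableOn hf.integrableOn]
  -- transport integrals over B to A
  have htrans : ∀ (f : E → ℝ), Integrable f μ →
      ∫ x in B, f x ∂μ = ∫ x in A, f (T x) ∂μ := by
    intro f hf
    rw [← hmap, integral_map hT.aemeasurable]
    rw [hmap]
    exact hf.aestronglyMeasurable.restrict
  have hαTA : Integrable (fun x => α (T x)) (μ.restrict A) := by
    have : Integrable α (Measure.map T (μ.restrict A)) := by
      rw [hmap]; exact hα.restrict
    exact (integrable_map_measure (by rw [hmap]; exact hα.aestronglyMeasurable.restrict) hT.aemeasurable).mp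
      (by rw [hmap]; exact hα.restrict)
  have hρTA : Integrable (fun x => ρ (T x)) (μ.restrict A) :=
    (integrable_map_measure (by rw [hmap]; exact hρ.aestronglyMeasurable.restrict) hT.aemeasurable).mp
      (by rw [hmap]; exact hρ.restrict)
  have haeA : ∀ᵐ x ∂(μ.restrict A), x ∈ A := ae_restrict_mem hA
  -- ∫ α ∂μ = 2 * ∫_A α
  have hαeq : ∫ x, α x ∂μ = 2 * ∫ x in A, α x ∂μ := by
    rw [hsplit α hα, htrans α hα]
    have : ∫ x in A, α (T x) ∂μ = ∫ x in A, α x ∂μ := by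
      apply integral_congr_ae
      filter_upwards [haeA] with x hx
      exact hαT x hx
    rw [this]; ring
  -- ∫ ρ ∂μ = ∫_A ‖Tx−x‖ α x
  have hρeq : ∫ x, ρ x ∂μ = ∫ x in A, ‖T x - x‖ * α x ∂μ := by
    rw [hsplit ρ hρ, htrans ρ hρ, ← integral_add hρ.restrict hρTA]
    apply integral_congr_ae
    filter_upwards [haeA] with x hx
    exact hpair x hx
  have hprodInt : Integrable (fun x => ‖T x - x‖ * α x) (μ.restrict A) := by
    apply (hρ.restrict.add hρTA).congr
    filter_upwards [haeA] with x hx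
    exact hpair x hx
  have hmono : d₁ * ∫ x in A, α x ∂μ ≤ ∫ x in A, ‖T x - x‖ * α x ∂μ := by
    rw [← integral_const_mul]
    apply integral_mono_ae (hα.restrict.const_mul d₁) hprodInt
    filter_upwards [haeA] with x hx
    exact mul_le_mul_of_nonneg_right (hdist x hx) (hαpos x hx)
  rw [hρeq, hαeq]
  calc d₁ * (2 * ∫ x in A, α x ∂μ) / 2 = d₁ * ∫ x in A, α x ∂μ := by ring
    _ ≤ ∫ x in A, ‖T x - x‖ * α x ∂μ := hmono
end

section
/- Let E be a real normed vector space with its Borel σ-algebra, μ a probability measure on E, and A, B disjoint measurable subsets with μ(A) + μ(B) = 1. Let T : E → E be measurable with (μ restricted to A) pushed forward by T equal to μ restricted to B. Let ρ, α : E → ℝ be μ-integrable, and let d₂ > 0. Assume for every x ∈ A: (i) ρ(x) + ρ(T x) = ‖T x − x‖ · α(x); (ii) α(T x) = α(x); (iii) α(x) ≥ 0; (iv) ‖T x − x‖ ≤ d₂. Then the expected alignment satisfies ∫ α dμ ≥ 2 · (∫ ρ dμ) / d₂. (Theorem 2, upper-bound direction: expected alignment is at least twice the expected robustness divided by sup(𝒟).)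 -/
open MeasureTheory

/-- Theorem 2, upper-bound direction: given a measure-preserving pairing `T` between the
supports `A` and `B` of the two classes, with pointwise robustness `ρ` and alignment `α`
satisfying `ρ x + ρ (T x) = ‖T x − x‖ · α x`, `α (T x) = α x`, `α x ≥ 0`, and
`‖T x − x‖ ≤ d₂` on `A`, the expected alignment is at least `2 · (∫ ρ) / d₂`. -/
theorem theorem2_upper_bound {E : Type*} [NormedAddCommGroup E] [NormedSpace ℝ E]
    [MeasurableSpace E] [BorelSpace E]
    (μ : Measure E) [IsProbabilityMeasure μ]
    (A B : Set E) (hA : MeasurableSet A) (hB : MeasurableSet B)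
    (hdisj : Disjoint A B) (hAB : μ A + μ B = 1)
    (T : E → E) (hT : Measurable T)
    (hmap : Measure.map T (μ.restrict A) = μ.restrict B)
    (ρ α : E → ℝ) (hρ : Integrable ρ μ) (hα : Integrable α μ)
    (d₂ : ℝ) (hd₂ : 0 < d₂)
    (hpair : ∀ x ∈ A, ρ x + ρ (T x) = ‖T x - x‖ * α x)
    (hαT : ∀ x ∈ A, α (T x) = α x)
    (hαpos : ∀ x ∈ A, 0 ≤ α x)
    (hdist : ∀ x ∈ A, ‖T x - x‖ ≤ d₂) :
    ∫ x, α x ∂μ ≥ 2 * (∫ x, ρ x ∂μ) / d₂ := by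

  -- complement of A ∪ B is null
  have hcompl : μ (A ∪ B)ᶜ = 0 := by
    have hU : μ (A ∪ B) = 1 := by rw [measure_union hdisj hB, hAB]
    have h := measure_compl (hA.union hB) (measure_ne_top μ _)
    rw [hU, measure_univ] at h
    simpa using h
  have hrestr : μ.restrict (A ∪ B) = μ := by
    rw [Measure.restrict_congr_set (ae_eq_univ.2 hcompl), Measure.restrict_univ]
  have hsplit : ∀ f : E → ℝ, Integrable f μ →
      ∫ x, f x ∂μ = ∫ x in A, f x ∂μ + ∫ x in B, f x ∂μ := by
    intro f hf
    conv_lhs => rw [← hrestr]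
    exact setIntegral_union hdisj hB hf.integrableOn hf.integrableOn
  -- transfer integrals on B to A via T
  have hBtoA : ∀ f : E → ℝ, Integrable f μ →
      ∫ x in B, f x ∂μ = ∫ x in A, f (T x) ∂μ := by
    intro f hf
    rw [← hmap, integral_map hT.aemeasurable (hmap.symm ▸ hf.1.restrict)]
  -- integrability of f ∘ T on A
  have hcompInt : ∀ f : E → ℝ, Integrable f μ →
      Integrable (fun x => f (T x)) (μ.restrict A) := by
    intro f hf
    have : Integrable f (Measure.map T (μ.restrict A)) := by
      rw [hmap]; exact hf.integrableOn
    exact (integrable_map_measure (hmap.symm ▸ hf.1.restrict) hT.aemeasurable).1 this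
  -- α on B equals α on A
  have hαB : ∫ x in B, α x ∂μ = ∫ x in A, α x ∂μ := by
    rw [hBtoA α hα]
    exact setIntegral_congr_fun hA (fun x hx => hαT x hx)
  have hαint : ∫ x, α x ∂μ = 2 * ∫ x in A, α x ∂μ := by
    rw [hsplit α hα, hαB]; ring
  -- ρ integral
  have hρsum : ∫ x, ρ x ∂μ = ∫ x in A, (ρ x + ρ (T x)) ∂μ := by
    rw [hsplit ρ hρ, hBtoA ρ hρ,
      integral_add hρ.integrableOn (hcompInt ρ hρ)]
  have hρeq : ∫ x, ρ x ∂μ = ∫ x in A, ‖T x - x‖ * α x ∂μ := by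
    rw [hρsum]
    exact setIntegral_congr_fun hA (fun x hx => hpair x hx)
  have hmono : ∫ x in A, ‖T x - x‖ * α x ∂μ ≤ ∫ x in A, d₂ * α x ∂μ := by
    refine setIntegral_mono_on ?_ (hα.integrableOn.const_mul d₂) hA ?_
    · have : Integrable (fun x => ρ x + ρ (T x)) (μ.restrict A) :=
        hρ.integrableOn.add (hcompInt ρ hρ)
      exact (integrable_congr ((ae_restrict_iff' hA).2
        (Filter.Eventually.of_forall (fun x hx => hpair x hx)))).1 this
    · intro x hx
      exact mul_le_mul_of_nonneg_right (hdist x hx) (hαpos x hx)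
  have key : ∫ x, ρ x ∂μ ≤ d₂ * ∫ x in A, α x ∂μ := by
    rw [hρeq, ← integral_const_mul]
    exact hmono
  rw [hαint, ge_iff_le, div_le_iff₀ hd₂]
  nlinarith [key]
end

section
/- Let E be a real normed vector space with its Borel σ-algebra, μ a probability measure on E, and A, B disjoint measurable subsets with μ(A) + μ(B) = 1. Let T : E → E be measurable with (μ restricted to A) pushed forward by T equal to μ restricted to B. Let ρ, α : E → ℝ be μ-integrable and d ≥ 0. Assume for every x ∈ A: ρ(x) + ρ(T x) = ‖T x − x‖ · α(x), α(T x) = α(x), and ‖T x − x‖ = d (the distance between paired points is constant). Then ∫ ρ dμ = d · (∫ α dμ) / 2. (The equality form of Theorem 2 used for the Spheres dataset, where both bounds combine to ρ_m = ‖Δx‖ · ᾱ / 2.) -/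
open MeasureTheory

/-- The equality form of Theorem 2 used for the Spheres dataset: when the distance
between paired points is the constant `d`, the expected robustness equals
`d · (∫ α) / 2`, i.e. `ρ_m = ‖Δx‖ · ᾱ / 2`. -/
theorem theorem2_equality {E : Type*} [NormedAddCommGroup E] [NormedSpace ℝ E]
    [MeasurableSpace E] [BorelSpace E]
    (μ : Measure E) [IsProbabilityMeasure μ]
    (A B : Set E) (hA : MeasurableSet A) (hB : MeasurableSet B)
    (hdisj : Disjoint A B) (hAB : μ A + μ B = 1)
    (T : E → E) (hT : Measurable T)
    (hmap : Measure.map T (μ.restrict A) = μ.restrict B)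
    (ρ α : E → ℝ) (hρ : Integrable ρ μ) (hα : Integrable α μ)
    (d : ℝ) (hd : 0 ≤ d)
    (hpair : ∀ x ∈ A, ρ x + ρ (T x) = ‖T x - x‖ * α x)
    (hαT : ∀ x ∈ A, α (T x) = α x)
    (hdist : ∀ x ∈ A, ‖T x - x‖ = d) :
    ∫ x, ρ x ∂μ = d * (∫ x, α x ∂μ) / 2 := by
  have hAB' : μ (A ∪ B) = 1 := by
    rw [measure_union hdisj hB, hAB]
  have hfull : μ.restrict (A ∪ B) = μ := by
    apply Measure.restrict_eq_self_of_ae_mem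
    have h0 : μ (A ∪ B)ᶜ = 0 := by
      rw [measure_compl (hA.union hB) (measure_ne_top μ _), hAB', measure_univ]
      simp
    exact ae_iff.2 (by convert h0 using 2; ext x; simp)
  have hmeasT : AEMeasurable T (μ.restrict A) := hT.aemeasurable
  have hsplit : ∀ (f : E → ℝ), Integrable f μ →
      ∫ x, f x ∂μ = (∫ x in A, f x ∂μ) + (∫ x in B, f x ∂μ) := by
    intro f hf
    rw [← setIntegral_union hdisj hB hf.integrableOn hf.integrableOn, hfull]
  have htransfer : ∀ (f : E → ℝ), Integrable f μ →
      ∫ x in B, f x ∂μ = ∫ x in A, f (T x) ∂μ := by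
    intro f hf
    rw [← hmap, integral_map hmeasT]
    rw [hmap]
    exact hf.integrableOn.aestronglyMeasurable
  have hTint : ∀ (f : E → ℝ), Integrable f μ →
      IntegrableOn (fun x => f (T x)) A μ := by
    intro f hf
    exact (integrable_map_measure (by rw [hmap]; exact hf.integrableOn.aestronglyMeasurable)
      hmeasT).mp (by rw [hmap]; exact hf.integrableOn)
  -- ∫ ρ = ∫_A (ρ + ρ∘T) = ∫_A d·α
  have hρeq : ∫ x, ρ x ∂μ = d * ∫ x in A, α x ∂μ := by
    rw [hsplit ρ hρ, htransfer ρ hρ,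
      ← integral_add hρ.integrableOn (hTint ρ hρ)]
    rw [← integral_const_mul]
    apply setIntegral_congr_fun hA
    intro x hx
    simp only
    rw [hpair x hx, hdist x hx]
  -- ∫ α = 2 ∫_A α
  have hαeq : ∫ x, α x ∂μ = 2 * ∫ x in A, α x ∂μ := by
    rw [hsplit α hα, htransfer α hα]
    have : ∫ x in A, α (T x) ∂μ = ∫ x in A, α x ∂μ :=
      setIntegral_congr_fun hA fun x hx => hαT x hx
    rw [this]; ring
  rw [hρeq, hαeq]; ring
end

section
/- Let E be a real normed vector space with its Borel σ-algebra, μ a probability measure on E, and A, B disjoint measurable subsets with μ(A) + μ(B) = 1. Let T : E → E be measurable with (μ restricted to A) pushed forward by T equal to μ restricted to B. Let ρ, α : E → ℝ be μ-integrable and assume for every x ∈ A that ρ(x) + ρ(T x) = ‖T x − x‖ · α(x) and α(T x) = α(x). Then (a) ∫ ρ dμ = ∫_A ‖T x − x‖ · α(x) dμ(x), and (b) ∫ α dμ = 2 · ∫_A α dμ. (The two integral identities established in the proof of Theorem 2.) -/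
open MeasureTheory

/-- The two integral identities established in the proof of Theorem 2: under a
measure-preserving pairing `T` between the class supports `A` and `B` with
`ρ x + ρ (T x) = ‖T x − x‖ · α x` and `α (T x) = α x` on `A`,
(a) `∫ ρ dμ = ∫_A ‖T x − x‖ · α x dμ(x)` and (b) `∫ α dμ = 2 · ∫_A α dμ`. -/
theorem theorem2_integral_identities {E : Type*} [NormedAddCommGroup E] [NormedSpace ℝ E]
    [MeasurableSpace E] [BorelSpace E]
    (μ : Measure E) [IsProbabilityMeasure μ]
    (A B : Set E) (hA : MeasurableSet A) (hB : MeasurableSet B)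
    (hdisj : Disjoint A B) (hAB : μ A + μ B = 1)
    (T : E → E) (hT : Measurable T)
    (hmap : Measure.map T (μ.restrict A) = μ.restrict B)
    (ρ α : E → ℝ) (hρ : Integrable ρ μ) (hα : Integrable α μ)
    (hpair : ∀ x ∈ A, ρ x + ρ (T x) = ‖T x - x‖ * α x)
    (hαT : ∀ x ∈ A, α (T x) = α x) :
    (∫ x, ρ x ∂μ = ∫ x in A, ‖T x - x‖ * α x ∂μ) ∧
    (∫ x, α x ∂μ = 2 * ∫ x in A, α x ∂μ) := by
  have hcompl : μ (A ∪ B)ᶜ = 0 := by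
    have h1 : μ (A ∪ B) = 1 := by rw [measure_union hdisj hB, hAB]
    have h2 := measure_compl (hA.union hB) (measure_ne_top μ _)
    rw [h1, measure_univ] at h2
    simpa using h2
  have hae : ∀ᵐ x ∂μ, x ∈ A ∪ B := by
    rw [ae_iff]
    exact hcompl
  have hres : μ.restrict (A ∪ B) = μ := Measure.restrict_eq_self_of_ae_mem hae
  have split : ∀ f : E → ℝ, Integrable f μ →
      ∫ x, f x ∂μ = (∫ x in A, f x ∂μ) + ∫ x in B, f x ∂μ := by
    intro f hf
    conv_lhs => rw [← hres]
    exact setIntegral_union hdisj hB hf.integrableOn hf.integrableOn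
  have mapInt : ∀ f : E → ℝ, AEStronglyMeasurable f (μ.restrict B) →
      ∫ x in B, f x ∂μ = ∫ x in A, f (T x) ∂μ := by
    intro f hf
    rw [← hmap] at hf ⊢
    exact integral_map hT.aemeasurable hf
  have intT : ∀ f : E → ℝ, Integrable f μ → IntegrableOn (fun x => f (T x)) A μ := by
    intro f hf
    have h1 : Integrable f (Measure.map T (μ.restrict A)) := by rw [hmap]; exact hf.integrableOn
    exact (integrable_map_measure h1.aestronglyMeasurable hT.aemeasurable).mp h1
  constructor
  · rw [split ρ hρ, mapInt ρ hρ.aestronglyMeasurable.restrict,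
      ← integral_add hρ.integrableOn (intT ρ hρ)]
    exact setIntegral_congr_fun hA hpair
  · rw [split α hα, mapInt α hα.aestronglyMeasurable.restrict,
      setIntegral_congr_fun hA hαT, two_mul]
end

section
/- Let E be a real normed vector space, let 0 < r₁ ≤ t ≤ r₂, and consider the threshold classifier that assigns class 1 to v when ‖v‖ > t and class −1 when ‖v‖ < t. Then: (a) for every x ∈ E with ‖x‖ = r₁, the robustness inf{‖δ‖ : ‖x + δ‖ ≥ t} equals t − r₁; (b) for every x' ∈ E with ‖x'‖ = r₂, the robustness inf{‖δ‖ : ‖x' + δ‖ ≤ t} equals r₂ − t; and hence (c) the expected robustness under equal class priors, (1/2)(t − r₁) + (1/2)(r₂ − t), equals (r₂ − r₁)/2, independently of t. In particular, for the Spheres dataset with r₁ = 1 and r₂ = 1.3 the expected robustness of every such threshold classifier is 0.15. -/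
/-- For the Spheres dataset with a threshold classifier at `t` (class 1 when `‖v‖ > t`,
class −1 when `‖v‖ < t`), with `0 < r₁ ≤ t ≤ r₂`:
(a) the robustness of any point on the inner sphere of radius `r₁` is `t − r₁`;
(b) the robustness of any point on the outer sphere of radius `r₂` is `r₂ − t`;
(c) hence the expected robustness under equal class priors is `(r₂ − r₁)/2`,
independently of `t`. -/
theorem spheres_threshold_robustness {E : Type*} [NormedAddCommGroup E] [NormedSpace ℝ E]
    (r₁ r₂ t : ℝ) (h₁ : 0 < r₁) (h₂ : r₁ ≤ t) (h₃ : t ≤ r₂) :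
    (∀ x : E, ‖x‖ = r₁ → sInf {r : ℝ | ∃ δ : E, ‖x + δ‖ ≥ t ∧ ‖δ‖ = r} = t - r₁) ∧
    (∀ x' : E, ‖x'‖ = r₂ → sInf {r : ℝ | ∃ δ : E, ‖x' + δ‖ ≤ t ∧ ‖δ‖ = r} = r₂ - t) ∧
    (1 / 2) * (t - r₁) + (1 / 2) * (r₂ - t) = (r₂ - r₁) / 2 := by
  refine ⟨?_, ?_, by ring⟩
  · intro x hx
    apply IsLeast.csInf_eq
    constructor
    · refine ⟨((t - r₁) / r₁) • x, ?_, ?_⟩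
      · have : x + ((t - r₁) / r₁) • x = (1 + (t - r₁) / r₁) • x := by
          rw [add_smul, one_smul]
        rw [this, norm_smul, hx, Real.norm_eq_abs]
        have h4 : (0:ℝ) ≤ (t - r₁) / r₁ := div_nonneg (by linarith) h₁.le
        rw [abs_of_nonneg (by linarith)]
        field_simp
        linarith
      · rw [norm_smul, hx, Real.norm_eq_abs,
          abs_of_nonneg (div_nonneg (by linarith) h₁.le)]
        field_simp
    · rintro r ⟨δ, hδ, rfl⟩
      have := norm_add_le x δ
      linarith [hx ▸ this]
  · intro x hx
    apply IsLeast.csInf_eq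
    constructor
    · have hr₂ : (0:ℝ) < r₂ := lt_of_lt_of_le h₁ (le_trans h₂ h₃)
      refine ⟨(-((r₂ - t) / r₂)) • x, ?_, ?_⟩
      · have : x + (-((r₂ - t) / r₂)) • x = (1 - (r₂ - t) / r₂) • x := by
          rw [sub_smul, one_smul, neg_smul, ← sub_eq_add_neg]
        rw [this, norm_smul, hx, Real.norm_eq_abs]
        have h4 : (1 : ℝ) - (r₂ - t) / r₂ = t / r₂ := by field_simp; ring
        rw [h4, abs_of_nonneg (div_nonneg (by linarith) hr₂.le)]
        field_simp
        linarith
      · rw [norm_smul, hx, Real.norm_eq_abs, abs_neg,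
          abs_of_nonneg (div_nonneg (by linarith) hr₂.le)]
        field_simp
    · rintro r ⟨δ, hδ, rfl⟩
      have h5 : ‖x‖ - ‖x + δ‖ ≤ ‖δ‖ := by
        have := norm_sub_norm_le x (x + δ)
        simpa [norm_sub_rev] using (abs_le.mp (abs_norm_sub_norm_le x (x+δ))).2
      linarith [hx ▸ h5]
end
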